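/- Let B be a symmetric positive definite N×N real matrix, μ, μ̂ ∈ ℝ^N, b_1, …, b_N ∈ ℝ^N nonzero vectors with |b_iᵀμ| ≤ 1 for all i, 0 < l ≤ v reals, and T ≥ 5, N ≥ 1 integers. Let a* be an index maximizing i ↦ b_iᵀμ, define Δ_i := b_{a*}ᵀμ − b_iᵀμ, g := v√(4 ln(TN)) + l, and p := 1/(4e√π). Assume that for all i ∈ {1,…,N}: |b_iᵀμ̂ − b_iᵀμ| ≤ l ‖b_i‖_{B^{−1}}. Let ξ be a random vector in ℝ^N whose law is the N-fold product of gaussianReal 0 1, set μ̃ := μ̂ + v B^{−1/2} ξ, and let a : ℝ^N → {1,…,N} be any measurable function satisfying b_{a(x)}ᵀx = max_i b_iᵀx for all x ∈ ℝ^N. Then E[ Δ_{a(μ̃)} ] ≤ (11g/p) · E[ ‖b_{a(μ̃)}‖_{B^{−1}} ] + 1/T². -/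

import Mathlib

set_option autoImplicit false
set_option maxHeartbeats 2000000

open MeasureTheory ProbabilityTheory Matrix

open scoped ComplexOrder in
/-- The square root of a positive semidefinite matrix, with its definition from the older
Mathlib (removed since). -/
noncomputable def Matrix.PosSemidef.sqrt {n 𝕜 : Type*} [Fintype n] [DecidableEq n] [RCLike 𝕜]
    {A : Matrix n n 𝕜} (hA : A.PosSemidef) : Matrix n n 𝕜 :=
  (hA.isHermitian.eigenvectorUnitary : Matrix n n 𝕜) *
    diagonal ((↑) ∘ (fun x : ℝ => Real.sqrt x) ∘ hA.isHermitian.eigenvalues) *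
    (star hA.isHermitian.eigenvectorUnitary : Matrix n n 𝕜)


namespace Matrix.PosSemidef

open scoped ComplexOrder in
lemma posSemidef_sqrt {n 𝕜 : Type*} [Fintype n] [DecidableEq n] [RCLike 𝕜]
    {A : Matrix n n 𝕜} (hA : A.PosSemidef) : PosSemidef hA.sqrt := by
  unfold Matrix.PosSemidef.sqrt
  apply PosSemidef.mul_mul_conjTranspose_same
  refine posSemidef_diagonal_iff.mpr fun i ↦ ?_
  rw [Function.comp_apply, RCLike.nonneg_iff]
  constructor
  · simp only [Function.comp_apply, RCLike.ofReal_re]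
    exact Real.sqrt_nonneg _
  · simp only [Function.comp_apply, RCLike.ofReal_im]

open scoped ComplexOrder in
lemma sqrt_mul_self {n 𝕜 : Type*} [Fintype n] [DecidableEq n] [RCLike 𝕜]
    {A : Matrix n n 𝕜} (hA : A.PosSemidef) : hA.sqrt * hA.sqrt = A := by
  let C : Matrix n n 𝕜 := hA.1.eigenvectorUnitary
  let E := diagonal ((↑) ∘ Real.sqrt ∘ hA.1.eigenvalues : n → 𝕜)
  suffices C * (E * (star C * C) * E) * star C = A by
    change (C * E * star C) * (C * E * star C) = A
    simpa only [← mul_assoc] using this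
  have : star C * C = 1 := by simp [C]
  rw [this, mul_one]
  have : E * E = diagonal ((↑) ∘ hA.1.eigenvalues) := by
    rw [diagonal_mul_diagonal]
    congr! with v
    simp [← pow_two, ← RCLike.ofReal_pow, Real.sq_sqrt (hA.eigenvalues_nonneg v)]
  rw [this]
  conv_rhs => rw [hA.1.spectral_theorem]
  rfl

end Matrix.PosSemidef
namespace SpectralTSAux

open Real
open scoped NNReal ENNReal



lemma pdf_conv (v₁ v₂ : ℝ≥0) (h1 : v₁ ≠ 0) (h2 : v₂ ≠ 0) (z : ℝ) :
    ∫ x : ℝ, gaussianPDFReal 0 v₁ x * gaussianPDFReal 0 v₂ (z - x)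
      = gaussianPDFReal 0 (v₁ + v₂) z := by
  have a0 : (0:ℝ) < v₁ := by positivity
  have b0 : (0:ℝ) < v₂ := by exact lt_of_le_of_ne v₂.coe_nonneg (by exact_mod_cast (Ne.symm h2))
  set A : ℝ := (v₁ : ℝ) with hA
  set Bv : ℝ := (v₂ : ℝ) with hBv
  have s0 : (0:ℝ) < A + Bv := by linarith
  set s : ℝ := A + Bv with hs
  set k : ℝ := s / (2*A*Bv) with hk
  have k0 : 0 < k := by rw [hk]; positivity
  set m : ℝ := A*z/s with hm
  set C : ℝ := (√(2*π*A))⁻¹ * (√(2*π*Bv))⁻¹ * rexp (-z^2/(2*s)) with hC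
  have key : ∀ x:ℝ, gaussianPDFReal 0 v₁ x * gaussianPDFReal 0 v₂ (z-x)
      = C * rexp (-k * (x-m)^2) := by
    intro x
    simp only [gaussianPDFReal, sub_zero, hC]
    rw [mul_mul_mul_comm, mul_assoc ((√(2*π*A))⁻¹ * (√(2*π*Bv))⁻¹), ← Real.exp_add, ← Real.exp_add]
    congr 1
    rw [hk, hm, hs]
    rw [← hA, ← hBv]
    congr 1
    field_simp
    ring
  rw [MeasureTheory.integral_congr_ae (Filter.Eventually.of_forall key)]
  rw [MeasureTheory.integral_const_mul]
  have hsub : ∫ x : ℝ, rexp (-k * (x - m)^2) = ∫ x : ℝ, rexp (-k * x^2) :=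
    integral_sub_right_eq_self (fun y => rexp (-k * y^2)) m
  rw [hsub, integral_gaussian k]
  -- now constants
  simp only [gaussianPDFReal, sub_zero, hC]
  have hcoe : ((v₁ + v₂ : ℝ≥0) : ℝ) = s := by rw [hs, hA, hBv]; push_cast; ring
  rw [hcoe]
  have hpk : π / k = (2*π*A) * (2*π*Bv) / ((2*π*s) * (2*π)) * (2*π) := by
    rw [hk]; field_simp
  have h2pA : (0:ℝ) < 2*π*A := by positivity
  have h2pB : (0:ℝ) < 2*π*Bv := by positivity
  have h2ps : (0:ℝ) < 2*π*s := by positivity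
  have hsq : √(π / k) = √(2*π*A) * √(2*π*Bv) / √(2*π*s) := by
    rw [show π / k = (2*π*A) * ((2*π*Bv) / (2*π*s)) by rw [hk]; field_simp]
    rw [Real.sqrt_mul h2pA.le, Real.sqrt_div h2pB.le]
    ring
  rw [hsq]
  have e1 : √(2*π*A) ≠ 0 := by positivity
  have e2 : √(2*π*Bv) ≠ 0 := by positivity
  have e3 : √(2*π*s) ≠ 0 := by positivity
  field_simp


lemma gaussian_conv (v₁ v₂ : ℝ≥0) :
    ((gaussianReal 0 v₁).prod (gaussianReal 0 v₂)).map (fun p : ℝ × ℝ => p.1 + p.2)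
      = gaussianReal 0 (v₁ + v₂) := by
  classical
  have hadd : Measurable (fun p : ℝ × ℝ => p.1 + p.2) := measurable_fst.add measurable_snd
  rcases eq_or_ne v₁ 0 with rfl | h1
  · rw [gaussianReal_zero_var, Measure.dirac_prod, Measure.map_map hadd measurable_prodMk_left]
    have : ((fun p : ℝ × ℝ => p.1 + p.2) ∘ Prod.mk (0:ℝ)) = (fun x : ℝ => 0 + x) := rfl
    rw [this, gaussianReal_map_const_add]
    simp
  rcases eq_or_ne v₂ 0 with rfl | h2
  · rw [gaussianReal_zero_var, Measure.prod_dirac, Measure.map_map hadd measurable_prodMk_right]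
    have : ((fun p : ℝ × ℝ => p.1 + p.2) ∘ (fun x : ℝ => (x, (0:ℝ)))) = (fun x : ℝ => x + 0) := rfl
    rw [this, gaussianReal_map_add_const]
    simp
  have hv : v₁ + v₂ ≠ 0 := by simp [h1]
  have pdf1m : Measurable (gaussianPDF 0 v₁) := measurable_gaussianPDF _ _
  have pdf2m : Measurable (gaussianPDF 0 v₂) := measurable_gaussianPDF _ _
  ext s hs
  rw [Measure.map_apply hadd hs, Measure.prod_apply (hadd hs)]
  have inner_eq : ∀ x : ℝ, (gaussianReal 0 v₂) (Prod.mk x ⁻¹' ((fun p : ℝ × ℝ => p.1 + p.2) ⁻¹' s))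
      = ∫⁻ z, s.indicator (fun _ => (1:ℝ≥0∞)) z * gaussianPDF 0 v₂ (z - x) := by
    intro x
    have hpre : (Prod.mk x ⁻¹' ((fun p : ℝ × ℝ => p.1 + p.2) ⁻¹' s)) = (fun y : ℝ => x + y) ⁻¹' s := rfl
    rw [hpre, gaussianReal_apply _ h2, ← lintegral_indicator (measurable_const_add x hs)]
    rw [← lintegral_add_right_eq_self
      (fun z => s.indicator (fun _ => (1:ℝ≥0∞)) z * gaussianPDF 0 v₂ (z - x)) x]
    congr 1 with y
    by_cases hxy : x + y ∈ s
    · simp [Set.indicator_apply, hxy, add_comm x y, add_sub_cancel_right]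
    · simp [Set.indicator_apply, hxy, add_comm x y, add_sub_cancel_right]
  simp_rw [inner_eq]
  set ind : ℝ → ℝ≥0∞ := s.indicator (fun _ => (1:ℝ≥0∞)) with hind
  have indm : Measurable ind := measurable_const.indicator hs
  have hker : Measurable (Function.uncurry fun x z => ind z * gaussianPDF 0 v₂ (z - x)) :=
    (indm.comp measurable_snd).mul (pdf2m.comp (measurable_snd.sub measurable_fst))
  rw [gaussianReal_of_var_ne_zero _ h1]
  rw [lintegral_withDensity_eq_lintegral_mul _ pdf1m hker.lintegral_prod_right]
  have step1 : ∫⁻ x, (gaussianPDF 0 v₁ * fun x => ∫⁻ z, ind z * gaussianPDF 0 v₂ (z - x)) x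
      = ∫⁻ x, ∫⁻ z, gaussianPDF 0 v₁ x * (ind z * gaussianPDF 0 v₂ (z - x)) := by
    refine lintegral_congr fun x => ?_
    simp only [Pi.mul_apply]
    exact (lintegral_const_mul _ (indm.mul (pdf2m.comp (measurable_id.sub_const x)))).symm
  rw [step1]
  rw [lintegral_lintegral_swap (((pdf1m.comp measurable_fst).mul hker).aemeasurable)]
  have step3 : ∀ z : ℝ, ∫⁻ x, gaussianPDF 0 v₁ x * (ind z * gaussianPDF 0 v₂ (z - x))
      = ind z * ∫⁻ x, gaussianPDF 0 v₁ x * gaussianPDF 0 v₂ (z - x) := by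
    intro z
    calc ∫⁻ x, gaussianPDF 0 v₁ x * (ind z * gaussianPDF 0 v₂ (z - x))
        = ∫⁻ x, ind z * (gaussianPDF 0 v₁ x * gaussianPDF 0 v₂ (z - x)) :=
          lintegral_congr fun x => by ring
      _ = ind z * ∫⁻ x, gaussianPDF 0 v₁ x * gaussianPDF 0 v₂ (z - x) :=
          lintegral_const_mul _ (pdf1m.mul (pdf2m.comp (measurable_const.sub measurable_id)))
  simp_rw [step3]
  have inner2 : ∀ z : ℝ, ∫⁻ x, gaussianPDF 0 v₁ x * gaussianPDF 0 v₂ (z - x)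
      = gaussianPDF 0 (v₁ + v₂) z := by
    intro z
    have hbd : ∀ y : ℝ, gaussianPDFReal 0 v₂ y ≤ (√(2*π*(v₂:ℝ)))⁻¹ := by
      intro y
      rw [gaussianPDFReal]
      have h1' : rexp (-(y - 0)^2/(2*(v₂:ℝ))) ≤ 1 := by
        rw [Real.exp_le_one_iff, neg_div]
        have hv2 : (0:ℝ) ≤ (y - 0)^2/(2*(v₂:ℝ)) := by positivity
        linarith
      calc (√(2*π*(v₂:ℝ)))⁻¹ * rexp (-(y - 0)^2/(2*(v₂:ℝ)))
          ≤ (√(2*π*(v₂:ℝ)))⁻¹ * 1 := by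
            apply mul_le_mul_of_nonneg_left h1' (by positivity)
        _ = (√(2*π*(v₂:ℝ)))⁻¹ := mul_one _
    have hmeas : AEStronglyMeasurable (fun x : ℝ => gaussianPDFReal 0 v₂ (z - x)) volume :=
      ((measurable_gaussianPDFReal 0 v₂).comp (measurable_const.sub measurable_id)).aestronglyMeasurable
    have hi : Integrable (fun x => gaussianPDFReal 0 v₁ x * gaussianPDFReal 0 v₂ (z - x)) := by
      have h0 := (integrable_gaussianPDFReal 0 v₁).bdd_mul hmeas
        (c := (√(2*π*(v₂:ℝ)))⁻¹) (Filter.Eventually.of_forall fun x => by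
          rw [Real.norm_eq_abs, abs_of_nonneg (gaussianPDFReal_nonneg _ _ _)]
          exact hbd (z - x))
      simpa [mul_comm] using h0
    have hofreal : (fun x => gaussianPDF 0 v₁ x * gaussianPDF 0 v₂ (z - x))
        = fun x => ENNReal.ofReal (gaussianPDFReal 0 v₁ x * gaussianPDFReal 0 v₂ (z - x)) := by
      funext x
      rw [ENNReal.ofReal_mul (gaussianPDFReal_nonneg _ _ _)]
      rfl
    rw [hofreal, ← ofReal_integral_eq_lintegral_ofReal hi (Filter.Eventually.of_forall fun x =>
      mul_nonneg (gaussianPDFReal_nonneg _ _ _) (gaussianPDFReal_nonneg _ _ _))]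
    rw [pdf_conv v₁ v₂ h1 h2 z]
    rfl
  simp_rw [inner2]
  have step5 : ∀ z : ℝ, ind z * gaussianPDF 0 (v₁ + v₂) z
      = s.indicator (gaussianPDF 0 (v₁ + v₂)) z := by
    intro z
    by_cases hz : z ∈ s <;> simp [hind, Set.indicator_apply, hz]
  simp_rw [step5]
  rw [lintegral_indicator hs, gaussianReal_apply _ hv]


lemma mdot {k : ℕ} (d : Fin k → ℝ) : Measurable fun w : Fin k → ℝ => d ⬝ᵥ w := by
  unfold dotProduct
  exact Finset.measurable_sum _ (fun j _ => by fun_prop)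

lemma map_dot : ∀ (n : ℕ) (c : Fin n → ℝ),
    (Measure.pi fun _ : Fin n => gaussianReal 0 1).map (fun x => c ⬝ᵥ x)
      = gaussianReal 0 (∑ i, c i ^ 2).toNNReal := by
  intro n
  induction n with
  | zero =>
      intro c
      have h0 : (fun x : Fin 0 → ℝ => c ⬝ᵥ x) = fun _ => (0:ℝ) := by
        funext x; simp [dotProduct]
      rw [h0, Measure.map_const]
      simp [gaussianReal_zero_var]
  | succ n ih =>
      intro c
      set e := MeasurableEquiv.piFinSuccAbove (fun _ : Fin (n+1) => ℝ) 0 with he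
      have hmp := measurePreserving_piFinSuccAbove (fun _ : Fin (n+1) => gaussianReal 0 1) 0
      have hpi : (Measure.pi fun _ : Fin (n+1) => gaussianReal 0 1)
          = ((gaussianReal 0 1).prod (Measure.pi fun _ : Fin n => gaussianReal 0 1)).map e.symm :=
        (hmp.symm e).map_eq.symm
      have hdot : (fun x : Fin (n+1) → ℝ => c ⬝ᵥ x) ∘ e.symm
          = fun p : ℝ × (Fin n → ℝ) => c 0 * p.1 + (fun j => c (Fin.succ j)) ⬝ᵥ p.2 := by
        funext p
        obtain ⟨y, w⟩ := p
        have h1 : e.symm (y, w) = Fin.cons y w := by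
          simp [he, MeasurableEquiv.piFinSuccAbove]
          rfl
        rw [Function.comp_apply, h1]
        simp [dotProduct, Fin.sum_univ_succ]
      rw [hpi, Measure.map_map (mdot c) e.symm.measurable, hdot]
      have hprodmap : (fun p : ℝ × (Fin n → ℝ) => c 0 * p.1 + (fun j => c (Fin.succ j)) ⬝ᵥ p.2)
          = (fun q : ℝ × ℝ => q.1 + q.2) ∘
            (Prod.map (fun y : ℝ => c 0 * y) (fun w : Fin n → ℝ => (fun j => c (Fin.succ j)) ⬝ᵥ w)) := rfl
      have hm1 : Measurable fun y : ℝ => c 0 * y := measurable_id.const_mul (c 0)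
      rw [hprodmap, ← Measure.map_map (show Measurable (fun q : ℝ × ℝ => q.1 + q.2) from measurable_fst.add measurable_snd)
        (hm1.prodMap (mdot _))]
      rw [← Measure.map_prod_map _ _ hm1 (mdot _)]
      rw [gaussianReal_map_const_mul (c 0), ih (fun j => c (Fin.succ j))]
      simp only [mul_zero]
      rw [gaussian_conv]
      congr 1
      ext
      push_cast
      rw [Real.coe_toNNReal _ (by positivity), Real.coe_toNNReal _ (by positivity)]
      rw [Fin.sum_univ_succ]
      push_cast
      ring


lemma int_xexp (t : ℝ) (ht : 0 < t) :
    ∫ x in Set.Ioi t, x * rexp (-x^2/2) = rexp (-t^2/2) := by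
  have hd : ∀ x ∈ Set.Ioi t, HasDerivAt (fun y : ℝ => -rexp (-y^2/2)) (x * rexp (-x^2/2)) x := by
    intro x _
    have h1 : HasDerivAt (fun y : ℝ => -y^2/2) (-(2*x^1)/2) x :=
      ((hasDerivAt_pow 2 x).neg).div_const 2
    have h2 : HasDerivAt (fun y : ℝ => -rexp (-y^2/2)) _ x := (h1.exp).neg
    convert h2 using 1
    ring
  have hint : IntegrableOn (fun x : ℝ => x * rexp (-x^2/2)) (Set.Ioi t) := by
    have h0 : Integrable (fun x : ℝ => x ^ (1:ℝ) * rexp (-(1/2:ℝ) * x^2)) :=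
      integrable_rpow_mul_exp_neg_mul_sq (by norm_num) (by norm_num)
    refine (h0.integrableOn.mono_set (Set.Ioi_subset_Ioi (le_of_lt ht)) |>.congr_fun ?_ measurableSet_Ioi)
    intro x hx
    simp only [Real.rpow_one]
    ring_nf
  have htend : Filter.Tendsto (fun y : ℝ => -rexp (-y^2/2)) Filter.atTop (nhds 0) := by
    rw [show (0:ℝ) = -0 by norm_num]
    apply Filter.Tendsto.neg
    apply Real.tendsto_exp_atBot.comp
    have h1 : Filter.Tendsto (fun y : ℝ => y^2/2) Filter.atTop Filter.atTop :=
      (Filter.tendsto_pow_atTop two_ne_zero).atTop_div_const (by norm_num)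
    have : (fun y : ℝ => -y^2/2) = fun y : ℝ => -(y^2/2) := by funext y; ring
    rw [this]
    exact Filter.tendsto_neg_atBot_iff.mpr h1
  have hc : ContinuousWithinAt (fun y : ℝ => -rexp (-y^2/2)) (Set.Ici t) t := by
    apply Continuous.continuousWithinAt
    fun_prop
  have := integral_Ioi_of_hasDerivAt_of_tendsto hc hd hint htend
  rw [this]
  ring

lemma gauss_tail (t : ℝ) (ht : 0 < t) :
    gaussianReal 0 1 {x : ℝ | t < |x|}
      ≤ ENNReal.ofReal (2 / (t * √(2*π)) * rexp (-t^2/2)) := by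
  have hone : (1 : ℝ≥0) ≠ 0 := one_ne_zero
  have hsplit : {x : ℝ | t < |x|} ⊆ Set.Ioi t ∪ (fun x : ℝ => -1 * x) ⁻¹' (Set.Ioi t) := by
    intro x hx
    simp only [Set.mem_setOf_eq] at hx
    rcases abs_cases x with ⟨h1, _⟩ | ⟨h1, _⟩
    · left; exact Set.mem_Ioi.mpr (h1 ▸ hx)
    · right; simp only [Set.mem_preimage, Set.mem_Ioi]; linarith [h1 ▸ hx]
  have hneg : gaussianReal 0 1 ((fun x : ℝ => -1 * x) ⁻¹' (Set.Ioi t)) = gaussianReal 0 1 (Set.Ioi t) := by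
    have hmap := gaussianReal_map_const_mul (μ := 0) (v := 1) (-1)
    have : (gaussianReal 0 1).map (fun x => -1 * x) = gaussianReal 0 1 := by
      rw [hmap]; norm_num
    conv_rhs => rw [← this]
    rw [Measure.map_apply (by fun_prop : Measurable fun x : ℝ => -1 * x) measurableSet_Ioi]
  have honeside : gaussianReal 0 1 (Set.Ioi t) ≤ ENNReal.ofReal (1 / (t * √(2*π)) * rexp (-t^2/2)) := by
    rw [gaussianReal_apply _ hone]
    have hb : ∀ x ∈ Set.Ioi t, gaussianPDF 0 1 x ≤ ENNReal.ofReal (x / (t * √(2*π)) * rexp (-x^2/2)) := by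
      intro x hx
      rw [Set.mem_Ioi] at hx
      unfold gaussianPDF gaussianPDFReal
      apply ENNReal.ofReal_le_ofReal
      push_cast
      simp only [mul_one, sub_zero]
      have h1 : (√(2*π))⁻¹ ≤ x / (t * √(2*π)) := by
        rw [div_eq_mul_inv, mul_inv]
        have : (1:ℝ) ≤ x / t := (one_le_div ht).mpr hx.le
        calc (√(2*π))⁻¹ = 1 * (√(2*π))⁻¹ := (one_mul _).symm
          _ ≤ (x / t) * (√(2*π))⁻¹ := by
              apply mul_le_mul_of_nonneg_right this (by positivity)
          _ = x * (t⁻¹ * (√(2*π))⁻¹) := by ring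
      exact mul_le_mul_of_nonneg_right h1 (Real.exp_nonneg _)
    calc ∫⁻ x in Set.Ioi t, gaussianPDF 0 1 x
        ≤ ∫⁻ x in Set.Ioi t, ENNReal.ofReal (x / (t * √(2*π)) * rexp (-x^2/2)) :=
          setLIntegral_mono (by fun_prop) hb
      _ = ENNReal.ofReal (∫ x in Set.Ioi t, x / (t * √(2*π)) * rexp (-x^2/2)) := by
          rw [← ofReal_integral_eq_lintegral_ofReal]
          · have hi0 : IntegrableOn (fun x : ℝ => x * rexp (-x^2/2)) (Set.Ioi t) := by
              have h0 : Integrable (fun x : ℝ => x ^ (1:ℝ) * rexp (-(1/2:ℝ) * x^2)) :=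
                integrable_rpow_mul_exp_neg_mul_sq (by norm_num) (by norm_num)
              refine (h0.integrableOn.mono_set (Set.Ioi_subset_Ioi (le_of_lt ht)) |>.congr_fun ?_ measurableSet_Ioi)
              intro x hx
              simp only [Real.rpow_one]
              ring_nf
            have : (fun x : ℝ => x / (t * √(2*π)) * rexp (-x^2/2))
                = fun x => (t * √(2*π))⁻¹ * (x * rexp (-x^2/2)) := by funext x; ring
            rw [this]
            exact hi0.const_mul _
          · filter_upwards [self_mem_ae_restrict measurableSet_Ioi] with x hx
            have : (0:ℝ) < x := lt_trans ht hx
            positivity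
      _ = ENNReal.ofReal (1 / (t * √(2*π)) * rexp (-t^2/2)) := by
          congr 1
          have : (fun x : ℝ => x / (t * √(2*π)) * rexp (-x^2/2))
              = fun x => (t * √(2*π))⁻¹ * (x * rexp (-x^2/2)) := by funext x; ring
          rw [this, integral_const_mul, int_xexp t ht]
          ring
  calc gaussianReal 0 1 {x : ℝ | t < |x|}
      ≤ gaussianReal 0 1 (Set.Ioi t ∪ (fun x : ℝ => -1 * x) ⁻¹' (Set.Ioi t)) := measure_mono hsplit
    _ ≤ gaussianReal 0 1 (Set.Ioi t) + gaussianReal 0 1 ((fun x : ℝ => -1 * x) ⁻¹' (Set.Ioi t)) :=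
        measure_union_le _ _
    _ = gaussianReal 0 1 (Set.Ioi t) + gaussianReal 0 1 (Set.Ioi t) := by rw [hneg]
    _ ≤ ENNReal.ofReal (1 / (t * √(2*π)) * rexp (-t^2/2)) + ENNReal.ofReal (1 / (t * √(2*π)) * rexp (-t^2/2)) :=
        add_le_add honeside honeside
    _ = ENNReal.ofReal (2 / (t * √(2*π)) * rexp (-t^2/2)) := by
        rw [← ENNReal.ofReal_add (by positivity) (by positivity)]
        congr 1
        ring

lemma gauss_anti : ENNReal.ofReal (rexp (-2) * (√(2*π))⁻¹) ≤ gaussianReal 0 1 {x : ℝ | 1 < x} := by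
  have hone : (1 : ℝ≥0) ≠ 0 := one_ne_zero
  have hsub : Set.Ioc (1:ℝ) 2 ⊆ {x : ℝ | 1 < x} := fun x hx => hx.1
  calc ENNReal.ofReal (rexp (-2) * (√(2*π))⁻¹)
      = ∫⁻ _ in Set.Ioc (1:ℝ) 2, ENNReal.ofReal (rexp (-2) * (√(2*π))⁻¹) := by
        rw [setLIntegral_const, Real.volume_Ioc]
        norm_num
    _ ≤ ∫⁻ x in Set.Ioc (1:ℝ) 2, gaussianPDF 0 1 x := by
        apply setLIntegral_mono (measurable_gaussianPDF 0 1)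
        intro x hx
        unfold gaussianPDF gaussianPDFReal
        apply ENNReal.ofReal_le_ofReal
        push_cast
        simp only [mul_one, sub_zero]
        rw [mul_comm]
        apply mul_le_mul_of_nonneg_left _ (by positivity)
        apply Real.exp_le_exp.mpr
        rcases hx with ⟨h1, h2⟩
        nlinarith
    _ = gaussianReal 0 1 (Set.Ioc 1 2) := (gaussianReal_apply _ hone _).symm
    _ ≤ gaussianReal 0 1 {x : ℝ | 1 < x} := measure_mono hsub

end SpectralTSAux

open SpectralTSAux Real
open scoped NNReal ENNReal

theorem expected_regret_bound
    {Ω : Type*} [MeasurableSpace Ω] (P : Measure Ω) [IsProbabilityMeasure P]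
    (N T : ℕ) (hT : 5 ≤ T) (hN : 1 ≤ N)
    (B : Matrix (Fin N) (Fin N) ℝ) (hB : B.PosDef)
    (μ μhat : Fin N → ℝ) (b : Fin N → (Fin N → ℝ))
    (hbne : ∀ i, b i ≠ 0) (hμb : ∀ i, |b i ⬝ᵥ μ| ≤ 1)
    (l v : ℝ) (hl : 0 < l) (hlv : l ≤ v)
    (astar : Fin N) (hastar : ∀ j, b j ⬝ᵥ μ ≤ b astar ⬝ᵥ μ)
    (g p : ℝ) (hg : g = v * Real.sqrt (4 * Real.log (T * N)) + l)
    (hp : p = 1 / (4 * Real.exp 1 * Real.sqrt Real.pi))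
    (hE : ∀ i : Fin N, |b i ⬝ᵥ μhat - b i ⬝ᵥ μ| ≤ l * Real.sqrt (b i ⬝ᵥ B⁻¹.mulVec (b i)))
    (ξ : Ω → (Fin N → ℝ)) (hξm : Measurable ξ)
    (hξ : P.map ξ = Measure.pi (fun _ : Fin N => gaussianReal 0 1))
    (μtil : Ω → (Fin N → ℝ))
    (hμtil : ∀ ω, μtil ω = μhat + v • (hB.posSemidef.sqrt)⁻¹.mulVec (ξ ω))
    (a : (Fin N → ℝ) → Fin N) (ham : Measurable a)
    (ha : ∀ (x : Fin N → ℝ) (j : Fin N), b j ⬝ᵥ x ≤ b (a x) ⬝ᵥ x) :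
    (∫ ω, (b astar ⬝ᵥ μ - b (a (μtil ω)) ⬝ᵥ μ) ∂P) ≤
      (11 * g / p) *
        (∫ ω, Real.sqrt (b (a (μtil ω)) ⬝ᵥ B⁻¹.mulVec (b (a (μtil ω)))) ∂P) +
        1 / T ^ 2 := by
  classical
  -- ### matrix algebra setup
  set S := hB.posSemidef.sqrt with hSdef
  have hSherm : S.IsHermitian := hB.posSemidef.posSemidef_sqrt.1
  have hSsymm : Sᵀ = S := (by simpa using hSherm : S.IsSymm)
  set M := S⁻¹ with hMdef
  have hMsymm : Mᵀ = M := by rw [hMdef, Matrix.transpose_nonsing_inv, hSsymm]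
  have hBinv : B⁻¹ = M * M := by
    rw [hMdef, ← Matrix.mul_inv_rev, hB.posSemidef.sqrt_mul_self]
  set c : Fin N → (Fin N → ℝ) := fun i => M *ᵥ b i with hcdef
  have hbc : ∀ (i : Fin N) (x : Fin N → ℝ), b i ⬝ᵥ (M *ᵥ x) = c i ⬝ᵥ x := by
    intro i x
    rw [Matrix.dotProduct_mulVec]
    congr 1
    rw [← hMsymm, Matrix.vecMul_transpose]
  have hwc : ∀ i, b i ⬝ᵥ B⁻¹ *ᵥ b i = c i ⬝ᵥ c i := by
    intro i
    rw [hBinv, ← Matrix.mulVec_mulVec, hbc i (M *ᵥ b i)]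
  set w : Fin N → ℝ := fun i => Real.sqrt (b i ⬝ᵥ B⁻¹.mulVec (b i)) with hwdef
  have hq : ∀ i, 0 < b i ⬝ᵥ B⁻¹ *ᵥ b i := by
    intro i
    have := hB.inv.re_dotProduct_pos (hbne i)
    simpa using this
  have hw0 : ∀ i, 0 < w i := fun i => Real.sqrt_pos.mpr (hq i)
  have hwsq : ∀ i, w i ^ 2 = ∑ j, c i j ^ 2 := by
    intro i
    rw [hwdef]
    simp only
    rw [Real.sq_sqrt (hq i).le, hwc]
    simp [dotProduct, sq]
  -- ### measure setup
  set γ := Measure.pi (fun _ : Fin N => gaussianReal (0:ℝ) 1) with hγdef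
  haveI : IsProbabilityMeasure γ := by rw [hγdef]; infer_instance
  set f : (Fin N → ℝ) → (Fin N → ℝ) := fun x => μhat + v • (M *ᵥ x) with hfdef
  have hfm : Measurable f := by
    rw [hfdef]
    refine measurable_pi_iff.mpr fun j => ?_
    have : (fun x : Fin N → ℝ => (μhat + v • (M *ᵥ x)) j)
        = fun x => μhat j + v * (M j ⬝ᵥ x) := by
      funext x; simp [Matrix.mulVec]
    rw [this]
    exact measurable_const.add ((mdot (M j)).const_mul v)
  have hμtilf : ∀ ω, μtil ω = f (ξ ω) := hμtil
  have hbf : ∀ (i : Fin N) (x : Fin N → ℝ), b i ⬝ᵥ f x = b i ⬝ᵥ μhat + v * (c i ⬝ᵥ x) := by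
    intro i x
    rw [hfdef]
    simp only
    rw [dotProduct_add, dotProduct_smul, hbc, smul_eq_mul]
  have hafm : Measurable fun x => a (f x) := ham.comp hfm
  have htrans : ∀ F : Fin N → ℝ, ∫ ω, F (a (μtil ω)) ∂P = ∫ x, F (a (f x)) ∂γ := by
    intro F
    have h1 : (fun ω => F (a (μtil ω))) = fun ω => (fun x => F (a (f x))) (ξ ω) := by
      funext ω; rw [hμtilf]
    rw [h1, ← hξ]
    exact (integral_map hξm.aemeasurable
      ((measurable_from_top.comp hafm)).aestronglyMeasurable).symm
  have hintF : ∀ F : Fin N → ℝ, Integrable (fun x => F (a (f x))) γ := by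
    intro F
    refine Integrable.mono' (integrable_const (∑ i, |F i|))
      (measurable_from_top.comp hafm).aestronglyMeasurable ?_
    filter_upwards with x
    rw [Real.norm_eq_abs]
    exact Finset.single_le_sum (f := fun i => |F i|) (fun i _ => abs_nonneg _) (Finset.mem_univ _)
  set Δ : Fin N → ℝ := fun i => b astar ⬝ᵥ μ - b i ⬝ᵥ μ with hΔdef
  have hΔ0 : ∀ i, 0 ≤ Δ i := fun i => sub_nonneg.mpr (hastar i)
  have hΔ2 : ∀ i, Δ i ≤ 2 := by
    intro i
    have h1 := abs_le.mp (hμb astar)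
    have h2 := abs_le.mp (hμb i)
    rw [hΔdef]; simp only; linarith [h1.2, h2.1]
  -- ### numeric facts
  have hTR : (5:ℝ) ≤ (T:ℝ) := by exact_mod_cast hT
  have hNR : (1:ℝ) ≤ (N:ℝ) := by exact_mod_cast hN
  have hTN5 : (5:ℝ) ≤ (T:ℝ) * (N:ℝ) := by nlinarith
  have he1 := Real.exp_one_lt_d9
  have he2 := Real.exp_one_gt_d9
  have hexp32 : rexp (3/2) ≤ 5 := by
    have h3 : rexp 3 < 25 := by
      have : rexp 3 = rexp 1 * rexp 1 * rexp 1 := by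
        rw [← Real.exp_add, ← Real.exp_add]; norm_num
      rw [this]; nlinarith [Real.exp_pos 1]
    nlinarith [Real.exp_pos (3/2), Real.exp_add (3/2) (3/2)]
  have hlog : (3/2 : ℝ) ≤ Real.log ((T:ℝ) * (N:ℝ)) := by
    rw [Real.le_log_iff_exp_le (by linarith)]
    linarith
  set tc : ℝ := Real.sqrt (4 * Real.log ((T:ℝ) * (N:ℝ))) with htcdef
  have hgtc : g = v * tc + l := hg
  have htc6 : Real.sqrt 6 ≤ tc := by
    apply Real.sqrt_le_sqrt; linarith
  have htcpos : 0 < tc := lt_of_lt_of_le (by positivity) htc6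
  have htcsq : tc ^ 2 = 4 * Real.log ((T:ℝ) * (N:ℝ)) := Real.sq_sqrt (by linarith)
  have hexptc : rexp (-tc^2/2) = (((T:ℝ) * (N:ℝ))^2)⁻¹ := by
    have hTNpos : (0:ℝ) < (T:ℝ)*(N:ℝ) := by linarith
    rw [htcsq, show -(4 * Real.log ((T:ℝ) * (N:ℝ)))/2
      = -(((2:ℕ):ℝ) * Real.log ((T:ℝ)*(N:ℝ))) by push_cast; ring]
    rw [Real.exp_neg, Real.exp_nat_mul, Real.exp_log hTNpos]
  have hsqrt2pi : Real.sqrt 6 ≤ Real.sqrt (2*Real.pi) := by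
    apply Real.sqrt_le_sqrt; nlinarith [Real.pi_gt_d6]
  have h6le : (6:ℝ) ≤ tc * Real.sqrt (2*Real.pi) := by
    calc (6:ℝ) = Real.sqrt 6 * Real.sqrt 6 := by
          rw [Real.mul_self_sqrt]; norm_num
      _ ≤ tc * Real.sqrt (2*Real.pi) :=
          mul_le_mul htc6 hsqrt2pi (Real.sqrt_nonneg _) htcpos.le
  have hgpos : 0 < g := by
    rw [hgtc]
    have : 0 ≤ v * tc := mul_nonneg (by linarith) htcpos.le
    linarith
  -- p bounds
  have hsqpi1 : (1.772:ℝ) ≤ Real.sqrt Real.pi := by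
    nlinarith [Real.sq_sqrt Real.pi_pos.le, Real.sqrt_nonneg Real.pi, Real.pi_gt_d6]
  have hsqpi2 : Real.sqrt Real.pi ≤ (1.7725:ℝ) := by
    nlinarith [Real.sq_sqrt Real.pi_pos.le, Real.sqrt_nonneg Real.pi, Real.pi_lt_d6]
  have hppos : 0 < p := by
    rw [hp]; positivity
  have hplb : (0.0518:ℝ) ≤ p := by
    rw [hp, le_div_iff₀ (by positivity)]
    nlinarith
  have hpub : p ≤ (0.052:ℝ) := by
    rw [hp, div_le_iff₀ (by positivity)]
    nlinarith
  -- ### the good event G and the optimism event O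
  set G : Set (Fin N → ℝ) := {x | ∀ i, |c i ⬝ᵥ x| ≤ tc * w i} with hGdef
  have hGm : MeasurableSet G := by
    have : G = ⋂ i, {x | |c i ⬝ᵥ x| ≤ tc * w i} := by
      ext x; simp [hGdef, Set.mem_iInter]
    rw [this]
    exact MeasurableSet.iInter fun i =>
      measurableSet_le ((mdot (c i)).abs) measurable_const
  set O : Set (Fin N → ℝ) := {x | b astar ⬝ᵥ μ < b astar ⬝ᵥ μhat + v * (c astar ⬝ᵥ x)} with hOdef
  have hOm : MeasurableSet O :=
    measurableSet_lt measurable_const (measurable_const.add ((mdot (c astar)).const_mul v))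
  -- law of each projection
  have hlaw : ∀ i : Fin N, γ.map (fun x => c i ⬝ᵥ x)
      = (gaussianReal 0 1).map (fun y => w i * y) := by
    intro i
    rw [hγdef, map_dot N (c i), gaussianReal_map_const_mul]
    congr 1
    · norm_num
    · ext
      push_cast [Real.coe_toNNReal _ (by positivity : (0:ℝ) ≤ ∑ j, c i j ^ 2)]
      rw [← hwsq i]
      ring
  -- bound on the complement of G
  have harm : ∀ i : Fin N, γ {x | tc * w i < |c i ⬝ᵥ x|}
      = gaussianReal 0 1 {y : ℝ | tc < |y|} := by
    intro i
    have hset : {x | tc * w i < |c i ⬝ᵥ x|}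
        = (fun x => c i ⬝ᵥ x) ⁻¹' {y : ℝ | tc * w i < |y|} := rfl
    have hsm : MeasurableSet {y : ℝ | tc * w i < |y|} :=
      measurableSet_lt measurable_const continuous_abs.measurable
    rw [hset, ← Measure.map_apply (mdot (c i)) hsm, hlaw i,
      Measure.map_apply (by fun_prop : Measurable fun y : ℝ => w i * y) hsm]
    congr 1
    ext y
    simp only [Set.mem_preimage, Set.mem_setOf_eq, abs_mul, abs_of_pos (hw0 i)]
    rw [mul_comm (w i) |y|]
    exact mul_lt_mul_iff_left₀ (hw0 i)
  have hGc : γ Gᶜ ≤ ENNReal.ofReal (1/(3*(T:ℝ)^2)) := by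
    have hsub : Gᶜ ⊆ ⋃ i, {x | tc * w i < |c i ⬝ᵥ x|} := by
      intro x hx
      simp only [hGdef, Set.mem_compl_iff, Set.mem_setOf_eq, not_forall, not_le] at hx
      obtain ⟨i, hi⟩ := hx
      exact Set.mem_iUnion.mpr ⟨i, hi⟩
    have htail := gauss_tail tc htcpos
    calc γ Gᶜ ≤ ∑ i : Fin N, γ {x | tc * w i < |c i ⬝ᵥ x|} :=
          le_trans (measure_mono hsub) (measure_iUnion_fintype_le _ _)
      _ = ∑ i : Fin N, gaussianReal 0 1 {y : ℝ | tc < |y|} :=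
          Finset.sum_congr rfl fun i _ => harm i
      _ = (N : ℝ≥0∞) * gaussianReal 0 1 {y : ℝ | tc < |y|} := by
          rw [Finset.sum_const, Finset.card_univ, Fintype.card_fin, nsmul_eq_mul]
      _ ≤ (N : ℝ≥0∞) * ENNReal.ofReal (2 / (tc * Real.sqrt (2*Real.pi)) * rexp (-tc^2/2)) :=
          mul_le_mul_right htail _
      _ ≤ ENNReal.ofReal (1/(3*(T:ℝ)^2)) := by
          rw [← ENNReal.ofReal_natCast, ← ENNReal.ofReal_mul (by positivity)]
          apply ENNReal.ofReal_le_ofReal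
          rw [hexptc]
          have hb1 : 2 / (tc * Real.sqrt (2*Real.pi)) ≤ 1/3 := by
            rw [div_le_div_iff₀ (by positivity) (by norm_num)]
            linarith
          have hb2 : (0:ℝ) < ((T:ℝ)*(N:ℝ))^2 := by positivity
          calc (N:ℝ) * (2 / (tc * Real.sqrt (2*Real.pi)) * (((T:ℝ)*(N:ℝ))^2)⁻¹)
              ≤ (N:ℝ) * (1/3 * (((T:ℝ)*(N:ℝ))^2)⁻¹) := by
                apply mul_le_mul_of_nonneg_left _ (by positivity)
                exact mul_le_mul_of_nonneg_right hb1 (by positivity)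
            _ = 1/(3*(T:ℝ)^2) * ((N:ℝ))⁻¹ := by field_simp
            _ ≤ 1/(3*(T:ℝ)^2) * 1 := by
                apply mul_le_mul_of_nonneg_left _ (by positivity)
                rw [inv_le_one_iff₀]; right; exact hNR
            _ = 1/(3*(T:ℝ)^2) := mul_one _
  -- optimism probability
  have hO : ENNReal.ofReal p ≤ γ O := by
    have hsub : {x : Fin N → ℝ | w astar < c astar ⬝ᵥ x} ⊆ O := by
      intro x hx
      simp only [Set.mem_setOf_eq] at hx
      simp only [hOdef, Set.mem_setOf_eq]
      have h1 := (abs_le.mp (hE astar)).1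
      have h2 : l * w astar ≤ v * w astar :=
        mul_le_mul_of_nonneg_right hlv (hw0 astar).le
      have h3 : v * w astar < v * (c astar ⬝ᵥ x) :=
        mul_lt_mul_of_pos_left hx (by linarith)
      have hwa : w astar = Real.sqrt (b astar ⬝ᵥ B⁻¹.mulVec (b astar)) := rfl
      rw [hwa] at h2 h3
      linarith
    have hmeaseq : γ {x : Fin N → ℝ | w astar < c astar ⬝ᵥ x} = gaussianReal 0 1 {y : ℝ | 1 < y} := by
      have hset : {x : Fin N → ℝ | w astar < c astar ⬝ᵥ x}
          = (fun x => c astar ⬝ᵥ x) ⁻¹' {y : ℝ | w astar < y} := rfl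
      have hsm : MeasurableSet {y : ℝ | w astar < y} := measurableSet_lt measurable_const measurable_id
      rw [hset, ← Measure.map_apply (mdot (c astar)) hsm, hlaw astar,
        Measure.map_apply (by fun_prop : Measurable fun y : ℝ => w astar * y) hsm]
      congr 1
      ext y
      simp only [Set.mem_preimage, Set.mem_setOf_eq]
      constructor
      · intro h; exact lt_of_mul_lt_mul_left (by simpa [mul_one] using h) (hw0 astar).le
      · intro h; calc w astar = w astar * 1 := (mul_one _).symm
          _ < w astar * y := by exact mul_lt_mul_of_pos_left h (hw0 astar)
    have hnum : p ≤ rexp (-2) * (Real.sqrt (2*Real.pi))⁻¹ := by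
      rw [hp]
      have hsq2 : Real.sqrt (2*Real.pi) = Real.sqrt 2 * Real.sqrt Real.pi :=
        Real.sqrt_mul (by norm_num) _
      have hexp2 : rexp (-2) = (rexp 1 * rexp 1)⁻¹ := by
        rw [← Real.exp_add, ← Real.exp_neg]; norm_num
      rw [hsq2, hexp2, one_div, ← mul_inv]
      apply inv_anti₀ (by positivity)
      have hs2a : (1.414:ℝ) ≤ Real.sqrt 2 := by
        nlinarith [Real.sq_sqrt (by norm_num : (0:ℝ) ≤ 2), Real.sqrt_nonneg 2]
      have hs2b : Real.sqrt 2 ≤ (1.415:ℝ) := by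
        nlinarith [Real.sq_sqrt (by norm_num : (0:ℝ) ≤ 2), Real.sqrt_nonneg 2]
      have key : rexp 1 * Real.sqrt 2 ≤ 4 := by nlinarith
      have hepos := Real.exp_pos 1
      have hpipos : (0:ℝ) < Real.sqrt Real.pi := lt_of_lt_of_le (by norm_num) hsqpi1
      nlinarith [mul_pos hepos hpipos, key]
    calc ENNReal.ofReal p ≤ ENNReal.ofReal (rexp (-2) * (Real.sqrt (2*Real.pi))⁻¹) :=
          ENNReal.ofReal_le_ofReal hnum
      _ ≤ gaussianReal 0 1 {y : ℝ | 1 < y} := gauss_anti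
      _ = γ {x : Fin N → ℝ | w astar < c astar ⬝ᵥ x} := hmeaseq.symm
      _ ≤ γ O := measure_mono hsub
  -- lower bound for the measure of G ∩ O
  set r : ℝ := (γ (G ∩ O)).toReal with hrdef
  have hrnn : 0 ≤ r := ENNReal.toReal_nonneg
  have hr : p - 1/(3*(T:ℝ)^2) ≤ r := by
    have h1 : γ O ≤ γ (G ∩ O) + γ Gᶜ := by
      refine le_trans (measure_mono ?_) (measure_union_le _ _)
      intro x hx
      by_cases hxG : x ∈ G
      · exact Or.inl ⟨hxG, hx⟩
      · exact Or.inr hxG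
    have h2 : ENNReal.ofReal p ≤ ENNReal.ofReal (r + 1/(3*(T:ℝ)^2)) := by
      refine le_trans hO (le_trans h1 ?_)
      rw [ENNReal.ofReal_add hrnn (by positivity)]
      exact add_le_add (le_of_eq (ENNReal.ofReal_toReal (measure_ne_top _ _)).symm) hGc
    have := (ENNReal.ofReal_le_ofReal_iff (by positivity)).mp h2
    linarith
  have hrlb : (0.038:ℝ) ≤ r := by
    have h75 : 1/(3*(T:ℝ)^2) ≤ 1/75 := by
      rw [div_le_div_iff₀ (by positivity) (by norm_num)]
      nlinarith
    linarith
  -- ### unsaturated arms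
  set U : Finset (Fin N) := Finset.univ.filter (fun i => Δ i ≤ g * w i) with hUdef
  have hastarU : astar ∈ U := by
    rw [hUdef, Finset.mem_filter]
    refine ⟨Finset.mem_univ _, ?_⟩
    have : Δ astar = 0 := by rw [hΔdef]; simp
    rw [this]
    exact mul_nonneg hgpos.le (hw0 astar).le
  obtain ⟨abar, habarU, habarmin⟩ := U.exists_min_image w ⟨astar, hastarU⟩
  have habar : Δ abar ≤ g * w abar := (Finset.mem_filter.mp habarU).2
  -- pointwise bounds on G
  have hup : ∀ (i : Fin N) (x : Fin N → ℝ), x ∈ G → b i ⬝ᵥ f x ≤ b i ⬝ᵥ μ + g * w i := by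
    intro i x hxG
    rw [hbf, hgtc]
    have hG1 := (abs_le.mp (hxG i)).2
    have hE1 := (abs_le.mp (hE i)).2
    have hwi : w i = Real.sqrt (b i ⬝ᵥ B⁻¹.mulVec (b i)) := rfl
    rw [← hwi] at hE1
    have h2 : v * (c i ⬝ᵥ x) ≤ v * (tc * w i) :=
      mul_le_mul_of_nonneg_left hG1 (by linarith)
    nlinarith
  have hlow : ∀ (i : Fin N) (x : Fin N → ℝ), x ∈ G → b i ⬝ᵥ μ ≤ b i ⬝ᵥ f x + g * w i := by
    intro i x hxG
    rw [hbf, hgtc]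
    have hG1 := (abs_le.mp (hxG i)).1
    have hE1 := (abs_le.mp (hE i)).1
    have hwi : w i = Real.sqrt (b i ⬝ᵥ B⁻¹.mulVec (b i)) := rfl
    rw [← hwi] at hE1
    have h2 : v * (-(tc * w i)) ≤ v * (c i ⬝ᵥ x) :=
      mul_le_mul_of_nonneg_left (by linarith) (by linarith)
    nlinarith
  have hC1 : ∀ x ∈ G ∩ O, a (f x) ∈ U := by
    rintro x ⟨hxG, hxO⟩
    rw [hUdef, Finset.mem_filter]
    refine ⟨Finset.mem_univ _, ?_⟩
    by_contra hcon
    push_neg at hcon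
    have h1 : b (a (f x)) ⬝ᵥ f x ≤ b (a (f x)) ⬝ᵥ μ + g * w (a (f x)) := hup _ _ hxG
    have h2 : b astar ⬝ᵥ μ < b astar ⬝ᵥ f x := by rw [hbf]; exact hxO
    have h3 : b astar ⬝ᵥ f x ≤ b (a (f x)) ⬝ᵥ f x := ha (f x) astar
    have h4 : Δ (a (f x)) = b astar ⬝ᵥ μ - b (a (f x)) ⬝ᵥ μ := rfl
    rw [h4] at hcon
    linarith
  have hC2 : ∀ x ∈ G, Δ (a (f x)) ≤ 2*g*(w abar) + g * w (a (f x)) := by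
    intro x hxG
    have h1 : b abar ⬝ᵥ μ ≤ b abar ⬝ᵥ f x + g * w abar := hlow _ _ hxG
    have h2 : b abar ⬝ᵥ f x ≤ b (a (f x)) ⬝ᵥ f x := ha (f x) abar
    have h3 : b (a (f x)) ⬝ᵥ f x ≤ b (a (f x)) ⬝ᵥ μ + g * w (a (f x)) := hup _ _ hxG
    have h4 : Δ (a (f x)) = b astar ⬝ᵥ μ - b (a (f x)) ⬝ᵥ μ := rfl
    have h5 : Δ abar = b astar ⬝ᵥ μ - b abar ⬝ᵥ μ := rfl
    rw [h4]
    rw [h5] at habar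
    linarith
  -- ### main integral estimates
  set Wv : ℝ := ∫ x, w (a (f x)) ∂γ with hWdef
  have hWnn : 0 ≤ Wv := by
    rw [hWdef]
    exact integral_nonneg fun x => Real.sqrt_nonneg _
  have hIw : Integrable (fun x => w (a (f x))) γ := hintF w
  have hIΔ : Integrable (fun x => Δ (a (f x))) γ := hintF Δ
  have hwann : ∀ x, 0 ≤ w (a (f x)) := fun x => (hw0 _).le
  have hC3 : w abar * r ≤ Wv := by
    have h1 : ∫ _x in G ∩ O, w abar ∂γ ≤ ∫ x in G ∩ O, w (a (f x)) ∂γ := by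
      refine setIntegral_mono_on ((integrableOn_const_iff).mpr (Or.inr (measure_lt_top _ _)))
        hIw.integrableOn (hGm.inter hOm) ?_
      intro x hx
      exact habarmin _ (hC1 x hx)
    rw [setIntegral_const] at h1
    calc w abar * r = (γ (G ∩ O)).toReal • w abar := by rw [smul_eq_mul, hrdef]; ring
      _ ≤ ∫ x in G ∩ O, w (a (f x)) ∂γ := h1
      _ ≤ Wv := setIntegral_le_integral hIw (Filter.Eventually.of_forall hwann)
  have hIlin : Integrable (fun x => 2*g*(w abar) + g * w (a (f x))) γ :=
    (integrable_const _).add (hIw.const_mul g)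
  have hmain : ∫ x, Δ (a (f x)) ∂γ ≤ 2*g*(w abar) + g * Wv + 2*(1/(3*(T:ℝ)^2)) := by
    have hsplit := (integral_add_compl hGm hIΔ).symm
    have hGpart : ∫ x in G, Δ (a (f x)) ∂γ ≤ 2*g*(w abar) + g * Wv := by
      calc ∫ x in G, Δ (a (f x)) ∂γ
          ≤ ∫ x in G, (2*g*(w abar) + g * w (a (f x))) ∂γ :=
            setIntegral_mono_on hIΔ.integrableOn hIlin.integrableOn hGm hC2
        _ ≤ ∫ x, (2*g*(w abar) + g * w (a (f x))) ∂γ := by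
            refine setIntegral_le_integral hIlin (Filter.Eventually.of_forall fun x => ?_)
            simp only [Pi.zero_apply]
            have h0 : (0:ℝ) ≤ 2*g*(w abar) :=
              mul_nonneg (mul_nonneg (by norm_num) hgpos.le) (hw0 abar).le
            have h1 : 0 ≤ g * w (a (f x)) := mul_nonneg hgpos.le (hwann x)
            linarith
        _ = 2*g*(w abar) + g * Wv := by
            rw [integral_add (integrable_const _) (hIw.const_mul g), integral_const,
              integral_const_mul, probReal_univ]
            simp [hWdef]
    have hGcpart : ∫ x in Gᶜ, Δ (a (f x)) ∂γ ≤ 2*(1/(3*(T:ℝ)^2)) := by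
      calc ∫ x in Gᶜ, Δ (a (f x)) ∂γ
          ≤ ∫ _x in Gᶜ, (2:ℝ) ∂γ :=
            setIntegral_mono_on hIΔ.integrableOn
              ((integrableOn_const_iff).mpr (Or.inr (measure_lt_top _ _))) hGm.compl
              (fun x _ => hΔ2 _)
        _ = (γ Gᶜ).toReal • (2:ℝ) := setIntegral_const _
        _ ≤ (1/(3*(T:ℝ)^2)) * 2 := by
            rw [smul_eq_mul]
            exact mul_le_mul_of_nonneg_right
              (ENNReal.toReal_le_of_le_ofReal (by positivity) hGc) (by norm_num)
        _ = 2*(1/(3*(T:ℝ)^2)) := by ring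
    linarith
  -- ### conclusion
  have hLHS : (∫ ω, (b astar ⬝ᵥ μ - b (a (μtil ω)) ⬝ᵥ μ) ∂P) = ∫ x, Δ (a (f x)) ∂γ := htrans Δ
  have hRHS : (∫ ω, Real.sqrt (b (a (μtil ω)) ⬝ᵥ B⁻¹.mulVec (b (a (μtil ω)))) ∂P) = Wv :=
    htrans w
  rw [hLHS, hRHS]
  have hfrac : (210:ℝ) ≤ 11/p := by
    rw [le_div_iff₀ hppos]
    nlinarith
  have hwalb : (0.038:ℝ) * w abar ≤ Wv := by
    calc (0.038:ℝ) * w abar ≤ r * w abar := mul_le_mul_of_nonneg_right hrlb (hw0 abar).le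
      _ = w abar * r := mul_comm _ _
      _ ≤ Wv := hC3
  have hkey : 2*g*(w abar) + g * Wv ≤ (11 * g / p) * Wv := by
    have h1 : (11 * g / p) * Wv = (11/p) * (g * Wv) := by ring
    rw [h1]
    have h2 : (210:ℝ) * (g * Wv) ≤ (11/p) * (g * Wv) :=
      mul_le_mul_of_nonneg_right hfrac (mul_nonneg hgpos.le hWnn)
    have h3 : g * ((0.038:ℝ) * w abar) ≤ g * Wv := mul_le_mul_of_nonneg_left hwalb hgpos.le
    nlinarith [mul_nonneg hgpos.le (hw0 abar).le, mul_nonneg hgpos.le hWnn]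
  have hsmall : 2*(1/(3*(T:ℝ)^2)) ≤ 1/(T:ℝ)^2 := by
    have hT2 : (0:ℝ) < 1/(T:ℝ)^2 := by positivity
    rw [show 2*(1/(3*(T:ℝ)^2)) = (2/3) * (1/(T:ℝ)^2) by
      field_simp]
    linarith
  have hcast : ((T:ℝ))^2 = ((T^2 : ℕ) : ℝ) := by push_cast; ring
  calc ∫ x, Δ (a (f x)) ∂γ ≤ 2*g*(w abar) + g * Wv + 2*(1/(3*(T:ℝ)^2)) := hmain
    _ ≤ (11 * g / p) * Wv + 1/(T:ℝ)^2 := by linarith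
    _ = (11 * g / p) * Wv + 1/(T:ℕ)^2 := by norm_num
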